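/- There exists an instance with nonlinear convex $f$ where the convexified Lagrangian dual bound is strictly weaker: with $f(x)=(x_1-0.5)^2+(x_2-0.5)^2$, $X=\{0,1\}^2$, $Z=\{(z_1,z_2):z_1=z_2\}$, and constraints $x_1=z_1$, $x_2=z_2$, one has $\zeta^{CLD}=\max_{\omega\in Z^\perp}\min_{x\in\operatorname{conv}(X)}[f(x)+\omega_1 x_1+\omega_2 x_2]=0$ while $\zeta^{LD}=\max_{\omega\in Z^\perp}\min_{x\in X}[f(x)+\omega_1 x_1+\omega_2 x_2]=1/2$; hence $\zeta^{CLD}<\zeta^{LD}$. -/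

import Mathlib

open RealInnerProductSpace

noncomputable def fEx (x : EuclideanSpace ℝ (Fin 2)) : ℝ :=
  (x 0 - 0.5) ^ 2 + (x 1 - 0.5) ^ 2

def XEx : Set (EuclideanSpace ℝ (Fin 2)) :=
  {x | (x 0 = 0 ∨ x 0 = 1) ∧ (x 1 = 0 ∨ x 1 = 1)}

def ZEx : Set (EuclideanSpace ℝ (Fin 2)) := {z | z 0 = z 1}

/-- `Z^⊥ = {υ : υᵀz = 0 for all z ∈ Z}`. -/
def ZperpEx : Set (EuclideanSpace ℝ (Fin 2)) := {w | ∀ z ∈ ZEx, ⟪w, z⟫ = (0 : ℝ)}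

lemma zero_mem_Zperp : (0 : EuclideanSpace ℝ (Fin 2)) ∈ ZperpEx := by
  intro z _; exact inner_zero_left z

lemma sum_eq_zero_of_Zperp {ω : EuclideanSpace ℝ (Fin 2)} (h : ω ∈ ZperpEx) :
    ω 0 + ω 1 = 0 := by
  have h1 := h (WithLp.toLp 2 (fun _ => (1 : ℝ))) (by simp [ZEx])
  simpa [PiLp.inner_apply, Fin.sum_univ_two, RCLike.inner_apply] using h1

lemma hull_subset_box :
    convexHull ℝ XEx ⊆ {x : EuclideanSpace ℝ (Fin 2) |
      0 ≤ x 0 ∧ x 0 ≤ 1 ∧ 0 ≤ x 1 ∧ x 1 ≤ 1} := by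
  apply convexHull_min
  · rintro x ⟨h0, h1⟩
    rcases h0 with h0 | h0 <;> rcases h1 with h1 | h1 <;>
      simp [h0, h1]
  · rintro x ⟨hx0, hx1, hx2, hx3⟩ y ⟨hy0, hy1, hy2, hy3⟩ a b ha hb hab
    simp only [Set.mem_setOf_eq, PiLp.add_apply, PiLp.smul_apply, smul_eq_mul]
    refine ⟨?_, ?_, ?_, ?_⟩ <;> nlinarith

lemma half_mem_hull :
    (WithLp.toLp 2 (fun _ => (0.5 : ℝ)) : EuclideanSpace ℝ (Fin 2)) ∈ convexHull ℝ XEx := by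
  have ha : (0 : EuclideanSpace ℝ (Fin 2)) ∈ convexHull ℝ XEx :=
    subset_convexHull ℝ XEx ⟨Or.inl rfl, Or.inl rfl⟩
  have hb : (WithLp.toLp 2 (fun _ => (1 : ℝ)) : EuclideanSpace ℝ (Fin 2)) ∈ convexHull ℝ XEx :=
    subset_convexHull ℝ XEx ⟨Or.inr rfl, Or.inr rfl⟩
  have := (convex_convexHull ℝ XEx) ha hb (by norm_num : (0:ℝ) ≤ 1/2)
    (by norm_num : (0:ℝ) ≤ 1/2) (by norm_num)
  convert this using 1
  ext i
  show (0.5 : ℝ) = (1/2 : ℝ) * 0 + (1/2 : ℝ) * 1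
  norm_num


lemma bdd_hull (ω : EuclideanSpace ℝ (Fin 2)) :
    BddBelow {s : ℝ | ∃ x ∈ convexHull ℝ XEx, s = fEx x + ω 0 * x 0 + ω 1 * x 1} := by
  refine ⟨-(|ω 0| + |ω 1|), ?_⟩
  rintro s ⟨x, hx, rfl⟩
  obtain ⟨h0, h1, h2, h3⟩ := hull_subset_box hx
  unfold fEx
  nlinarith [neg_abs_le (ω 0), neg_abs_le (ω 1), abs_nonneg (ω 0), abs_nonneg (ω 1),
    sq_nonneg (x 0 - 0.5), sq_nonneg (x 1 - 0.5)]

lemma bdd_X (ω : EuclideanSpace ℝ (Fin 2)) :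
    BddBelow {s : ℝ | ∃ x ∈ XEx, s = fEx x + ω 0 * x 0 + ω 1 * x 1} :=
  (bdd_hull ω).mono (by rintro s ⟨x, hx, e⟩; exact ⟨x, subset_convexHull ℝ XEx hx, e⟩)

lemma zero_mem_X : (0 : EuclideanSpace ℝ (Fin 2)) ∈ XEx := ⟨Or.inl rfl, Or.inl rfl⟩

theorem stmt8 :
    sSup {r : ℝ | ∃ ω ∈ ZperpEx,
        r = sInf {s : ℝ | ∃ x ∈ convexHull ℝ XEx, s = fEx x + ω 0 * x 0 + ω 1 * x 1}} = 0 ∧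
    sSup {r : ℝ | ∃ ω ∈ ZperpEx,
        r = sInf {s : ℝ | ∃ x ∈ XEx, s = fEx x + ω 0 * x 0 + ω 1 * x 1}} = 1 / 2 ∧
    sSup {r : ℝ | ∃ ω ∈ ZperpEx,
        r = sInf {s : ℝ | ∃ x ∈ convexHull ℝ XEx, s = fEx x + ω 0 * x 0 + ω 1 * x 1}} <
      sSup {r : ℝ | ∃ ω ∈ ZperpEx,
        r = sInf {s : ℝ | ∃ x ∈ XEx, s = fEx x + ω 0 * x 0 + ω 1 * x 1}} := by
  have hp : ∀ i : Fin 2, (WithLp.toLp 2 (fun _ => (0.5 : ℝ)) : EuclideanSpace ℝ (Fin 2)) i = 0.5 :=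
    fun _ => rfl
  have hCLD : sSup {r : ℝ | ∃ ω ∈ ZperpEx,
      r = sInf {s : ℝ | ∃ x ∈ convexHull ℝ XEx, s = fEx x + ω 0 * x 0 + ω 1 * x 1}} = 0 := by
    apply IsGreatest.csSup_eq
    constructor
    · refine ⟨0, zero_mem_Zperp, ?_⟩
      have hL : IsLeast {s : ℝ | ∃ x ∈ convexHull ℝ XEx,
          s = fEx x + (0 : EuclideanSpace ℝ (Fin 2)) 0 * x 0 +
            (0 : EuclideanSpace ℝ (Fin 2)) 1 * x 1} 0 := by
        constructor
        · refine ⟨_, half_mem_hull, ?_⟩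
          show (0:ℝ) = fEx _ + 0 * 0.5 + 0 * 0.5
          norm_num [fEx]
        · rintro s ⟨x, hx, rfl⟩
          show (0:ℝ) ≤ fEx x + 0 * x 0 + 0 * x 1
          unfold fEx; nlinarith [sq_nonneg (x 0 - 0.5), sq_nonneg (x 1 - 0.5)]
      exact hL.csInf_eq.symm
    · rintro r ⟨ω, hω, rfl⟩
      have hs := sum_eq_zero_of_Zperp hω
      apply csInf_le (bdd_hull ω)
      refine ⟨_, half_mem_hull, ?_⟩
      show (0:ℝ) = fEx _ + ω 0 * 0.5 + ω 1 * 0.5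
      have : fEx (WithLp.toLp 2 (fun _ => (0.5 : ℝ)) : EuclideanSpace ℝ (Fin 2)) = 0 := by norm_num [fEx, hp]
      rw [this]; linarith
  have hLD : sSup {r : ℝ | ∃ ω ∈ ZperpEx,
      r = sInf {s : ℝ | ∃ x ∈ XEx, s = fEx x + ω 0 * x 0 + ω 1 * x 1}} = 1 / 2 := by
    apply IsGreatest.csSup_eq
    constructor
    · refine ⟨0, zero_mem_Zperp, ?_⟩
      have hL : IsLeast {s : ℝ | ∃ x ∈ XEx,
          s = fEx x + (0 : EuclideanSpace ℝ (Fin 2)) 0 * x 0 +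
            (0 : EuclideanSpace ℝ (Fin 2)) 1 * x 1} (1/2) := by
        constructor
        · refine ⟨0, zero_mem_X, ?_⟩
          show (1/2 : ℝ) = fEx 0 + 0 * 0 + 0 * 0
          norm_num [fEx]
        · rintro s ⟨x, ⟨h0, h1⟩, rfl⟩
          have hf : fEx x = 1/2 := by
            rcases h0 with h0 | h0 <;> rcases h1 with h1 | h1 <;> norm_num [fEx, h0, h1]
          show (1/2 : ℝ) ≤ fEx x + 0 * x 0 + 0 * x 1
          rw [hf]; ring_nf; norm_num
      exact hL.csInf_eq.symm
    · rintro r ⟨ω, hω, rfl⟩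
      apply csInf_le (bdd_X ω)
      refine ⟨0, zero_mem_X, ?_⟩
      show (1/2 : ℝ) = fEx 0 + ω 0 * (0 : EuclideanSpace ℝ (Fin 2)) 0 +
        ω 1 * (0 : EuclideanSpace ℝ (Fin 2)) 1
      norm_num [fEx, show ((0 : EuclideanSpace ℝ (Fin 2)) 0) = 0 from rfl,
        show ((0 : EuclideanSpace ℝ (Fin 2)) 1) = 0 from rfl]
  refine ⟨hCLD, hLD, ?_⟩
  rw [hCLD, hLD]; norm_num
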